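/- Suppose p : Ω_h × [0,∞) → ℝ is differentiable in its time variable and satisfies the state-constrained forward (master) equation: for every x ∈ Ω_h and t ≥ 0, ∂_t p(x,t) = (1/h)·Σ_{j=1}^M 1[x − ν_j·h ∈ Ω_h]·(Φ_j⁺(x − ν_j·h)·p(x − ν_j·h, t) − Φ_j⁻(x)·p(x,t)) + (1/h)·Σ_{j=1}^M 1[x + ν_j·h ∈ Ω_h]·(Φ_j⁻(x + ν_j·h)·p(x + ν_j·h, t) − Φ_j⁺(x)·p(x,t)). Then the total probability in Ω_h is conserved: for every t ≥ 0, Σ_{x ∈ Ω_h} p(x,t) = Σ_{x ∈ Ω_h} p(x,0). -/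

import Mathlib

open scoped Classical BigOperators
open MeasureTheory

noncomputable section

/-- Shift a grid point `x` by the integer vector `ν` scaled by `h`. -/
def shiftPt {N : ℕ} (h : ℝ) (x : Fin N → ℝ) (ν : Fin N → ℤ) : Fin N → ℝ :=
  fun k => x k + (ν k : ℝ) * h

/-- The state-constrained discrete Hamiltonian `H_h`. -/
def discHam {N M : ℕ} (h : ℝ) (Ωh : Finset (Fin N → ℝ)) (ν : Fin M → Fin N → ℤ)
    (Φp Φm : Fin M → (Fin N → ℝ) → ℝ) (u : (Fin N → ℝ) → ℝ) (x : Fin N → ℝ) : ℝ :=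
  ∑ j : Fin M,
    ((if shiftPt h x (ν j) ∈ Ωh then
        Φp j x * (Real.exp ((u (shiftPt h x (ν j)) - u x) / h) - 1) else 0)
      + (if shiftPt h x (-(ν j)) ∈ Ωh then
        Φm j x * (Real.exp ((u (shiftPt h x (-(ν j))) - u x) / h) - 1) else 0))

lemma shiftPt_shiftPt_neg {N : ℕ} (h : ℝ) (x : Fin N → ℝ) (v : Fin N → ℤ) :
    shiftPt h (shiftPt h x v) (-v) = x := by
  funext k; simp [shiftPt]

lemma shiftPt_neg_shiftPt {N : ℕ} (h : ℝ) (x : Fin N → ℝ) (v : Fin N → ℤ) :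
    shiftPt h (shiftPt h x (-v)) v = x := by
  funext k; simp [shiftPt]

lemma sum_shift {N : ℕ} (h : ℝ) (Ωh : Finset (Fin N → ℝ)) (v : Fin N → ℤ)
    (g : (Fin N → ℝ) → ℝ) :
    ∑ x ∈ Ωh, (if shiftPt h x v ∈ Ωh then g (shiftPt h x v) else 0)
      = ∑ x ∈ Ωh, (if shiftPt h x (-v) ∈ Ωh then g x else 0) := by
  rw [← Finset.sum_filter, ← Finset.sum_filter]
  refine Finset.sum_nbij' (fun x => shiftPt h x v) (fun y => shiftPt h y (-v))
    ?_ ?_ ?_ ?_ ?_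
  · intro a ha
    simp only [Finset.mem_filter] at ha ⊢
    simp [shiftPt_shiftPt_neg, ha.1, ha.2]
  · intro a ha
    simp only [Finset.mem_filter] at ha ⊢
    simp [shiftPt_neg_shiftPt, ha.1, ha.2]
  · intro a ha
    exact shiftPt_shiftPt_neg h a v
  · intro a ha
    exact shiftPt_neg_shiftPt h a v
  · intro a ha
    rfl

/-- **Conservation of total probability** for the state-constrained forward
(master) equation on the grid `Ω_h`. -/
theorem forward_equation_mass_conservation
    {N M : ℕ} (hN : 0 < N) (hM : 0 < M)
    (h : ℝ) (hh : 0 < h)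
    (Ω : Set (Fin N → ℝ)) (hΩo : IsOpen Ω) (hΩne : Ω.Nonempty)
    (hΩbd : Bornology.IsBounded Ω)
    (hΩpos : closure Ω ⊆ {x : Fin N → ℝ | ∀ k, 0 < x k})
    (ν : Fin M → Fin N → ℤ)
    (Φp Φm : Fin M → (Fin N → ℝ) → ℝ)
    (hΦpc : ∀ j, ContinuousOn (Φp j) (closure Ω))
    (hΦmc : ∀ j, ContinuousOn (Φm j) (closure Ω))
    (hΦp0 : ∀ j, ∀ x ∈ closure Ω, 0 ≤ Φp j x)
    (hΦm0 : ∀ j, ∀ x ∈ closure Ω, 0 ≤ Φm j x)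
    (Ωh : Finset (Fin N → ℝ))
    (hΩh : ∀ x : Fin N → ℝ,
      x ∈ Ωh ↔ ((∃ i : Fin N → ℕ, ∀ k, x k = (i k : ℝ) * h) ∧ x ∈ closure Ω))
    (hne : Ωh.Nonempty)
    (p : (Fin N → ℝ) → ℝ → ℝ)
    (hp : ∀ x ∈ Ωh, ∀ t ∈ Set.Ici (0:ℝ),
      HasDerivWithinAt (fun s => p x s)
        ((1 / h) * ∑ j : Fin M,
            ((if shiftPt h x (-(ν j)) ∈ Ωh then
                Φp j (shiftPt h x (-(ν j))) * p (shiftPt h x (-(ν j))) t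
                  - Φm j x * p x t else 0)
              + (if shiftPt h x (ν j) ∈ Ωh then
                Φm j (shiftPt h x (ν j)) * p (shiftPt h x (ν j)) t
                  - Φp j x * p x t else 0)))
        (Set.Ici 0) t) :
    ∀ t ∈ Set.Ici (0:ℝ), ∑ x ∈ Ωh, p x t = ∑ x ∈ Ωh, p x 0 := by
  intro t ht
  -- The total mass has zero derivative on `Ici 0`.
  have key : ∀ s ∈ Set.Ici (0:ℝ),
      HasDerivWithinAt (fun s => ∑ x ∈ Ωh, p x s) 0 (Set.Ici 0) s := by
    intro s hs
    have hsum := HasDerivWithinAt.sum (fun x hx => hp x hx s hs)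
    have hzero : (∑ x ∈ Ωh, (1 / h) * ∑ j : Fin M,
        ((if shiftPt h x (-(ν j)) ∈ Ωh then
            Φp j (shiftPt h x (-(ν j))) * p (shiftPt h x (-(ν j))) s
              - Φm j x * p x s else 0)
          + (if shiftPt h x (ν j) ∈ Ωh then
            Φm j (shiftPt h x (ν j)) * p (shiftPt h x (ν j)) s
              - Φp j x * p x s else 0))) = 0 := by
      rw [← Finset.mul_sum, Finset.sum_comm]
      have hj : ∀ j : Fin M, (∑ x ∈ Ωh,
          ((if shiftPt h x (-(ν j)) ∈ Ωh then
              Φp j (shiftPt h x (-(ν j))) * p (shiftPt h x (-(ν j))) s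
                - Φm j x * p x s else 0)
            + (if shiftPt h x (ν j) ∈ Ωh then
              Φm j (shiftPt h x (ν j)) * p (shiftPt h x (ν j)) s
                - Φp j x * p x s else 0))) = 0 := by
        intro j
        have e1 : ∀ (c : Prop) (_ : Decidable c) (a b : ℝ),
            (if c then a - b else 0) = (if c then a else 0) - (if c then b else 0) := by
          intro c inst a b; split <;> simp
        simp_rw [Finset.sum_add_distrib, e1, Finset.sum_sub_distrib]
        have t1 := sum_shift h Ωh (-(ν j)) (fun x => Φp j x * p x s)
        have t3 := sum_shift h Ωh (ν j) (fun x => Φm j x * p x s)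
        simp only [neg_neg] at t1
        rw [t1, t3]
        ring
      rw [Finset.sum_congr rfl (fun j _ => hj j)]
      simp
    rw [hzero] at hsum
    have e : (fun s => ∑ x ∈ Ωh, p x s) = ∑ i ∈ Ωh, fun s => p i s := by
      funext s'
      simp [Finset.sum_apply]
    rw [e]
    exact hsum
  -- Hence it is constant on `[0, t]`.
  have hc : ∀ s ∈ Set.Icc (0:ℝ) t,
      (fun s => ∑ x ∈ Ωh, p x s) s = (fun s => ∑ x ∈ Ωh, p x s) 0 := by
    apply constant_of_has_deriv_right_zero
    · intro s hs
      exact ((key s hs.1).continuousWithinAt).mono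
        (Set.Icc_subset_Ici_self)
    · intro s hs
      exact (key s hs.1).mono (Set.Ici_subset_Ici.2 hs.1)
  exact hc t ⟨ht, le_rfl⟩
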